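/- In the construction of failure vectors, if the perturbation function α ↦ pert(Φ, α, ε) is increasing in Φ and oscillators at phase Φ do not fire under a given partial failure assignment, then oscillators at every phase Ψ < Φ also do not fire; consequently every failure vector produced by fail_T satisfies the well-formedness condition that f_i = ★ implies f_j = ★ for all j ≤ i. -/

import Mathlib

/-- `alphaF T pert ref σ F Φ` is the number of oscillators with phase greater
than `Φ` perceived to be firing by oscillators with phase `Φ`, in global state
`σ` with failure vector `F` (entries `none` represent ★).  It is computed
downwards from phase `T` (where it is `0`). -/
def alphaF (T : ℕ) (pert ref : ℕ → ℕ → ℕ) (σ : ℕ → ℕ) (F : ℕ → Option ℕ) (Φ : ℕ) : ℕ :=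
  if h : T ≤ Φ then 0
  else
    let a := alphaF T pert ref σ F (Φ + 1)
    match F (Φ + 1) with
    | none => a
    | some f => if T < 1 + ref (Φ + 1) (pert (Φ + 1) a) then a + σ (Φ + 1) - f else a
termination_by T - Φ
decreasing_by omega

/-- `update^Φ(σ,F) = 1 + ref(Φ, pert(Φ, α^Φ(σ,F), ε))`. -/
def updateF (T : ℕ) (pert ref : ℕ → ℕ → ℕ) (σ : ℕ → ℕ) (F : ℕ → Option ℕ) (Φ : ℕ) : ℕ :=
  1 + ref Φ (pert Φ (alphaF T pert ref σ F Φ))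

/-- The phase transition function: firing phases are mapped to `1`, all other
phases to their updated value. -/
def tauF (T : ℕ) (pert ref : ℕ → ℕ → ℕ) (σ : ℕ → ℕ) (F : ℕ → Option ℕ) (Φ : ℕ) : ℕ :=
  if T < updateF T pert ref σ F Φ then 1 else updateF T pert ref σ F Φ

/-- The successor of global state `σ` under failure vector `F`: phase `Φ`
receives the total count of the phases mapped to `Φ` by `tauF`. -/
def sucF (T : ℕ) (pert ref : ℕ → ℕ → ℕ) (σ : ℕ → ℕ) (F : ℕ → Option ℕ) : ℕ → ℕ :=
  fun Φ => ∑ Ψ ∈ Finset.Icc 1 T, if tauF T pert ref σ F Ψ = Φ then σ Ψ else 0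

/-- The set of possible failure vectors of a global state `σ`: at every phase
`Φ ∈ {1,…,T}` that fires, any number `f ≤ k_Φ` of broadcast failures may occur
(`F Φ = some f`); at non-firing phases the entry is ★ (`F Φ = none`), and
entries outside `{1,…,T}` are ★. -/
def failSet (T : ℕ) (pert ref : ℕ → ℕ → ℕ) (σ : ℕ → ℕ) : Set (ℕ → Option ℕ) :=
  { F | (∀ Φ, 1 ≤ Φ → Φ ≤ T →
          ((T < updateF T pert ref σ F Φ → ∃ f, F Φ = some f ∧ f ≤ σ Φ) ∧
           (¬ T < updateF T pert ref σ F Φ → F Φ = none))) ∧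
        (∀ Φ, Φ = 0 ∨ T < Φ → F Φ = none) }

/-- `pfail(k,f) = μ^f (1−μ)^(k−f) C(k,f)`. -/
def pfailR (μ : ℝ) (k f : ℕ) : ℝ := μ ^ f * (1 - μ) ^ (k - f) * (k.choose f : ℝ)

/-- `pfailvec(σ,F) = ∏_{Φ=1}^T pfail(k_Φ, f_Φ)`, with factor `1` for ★ entries. -/
def pfailvecR (μ : ℝ) (T : ℕ) (σ : ℕ → ℕ) (F : ℕ → Option ℕ) : ℝ :=
  ∏ Φ ∈ Finset.Icc 1 T, (match F Φ with | some f => pfailR μ (σ Φ) f | none => 1)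

lemma alphaF_eq_of_none (T : ℕ) (pert ref : ℕ → ℕ → ℕ) (σ : ℕ → ℕ) (F : ℕ → Option ℕ) :
    ∀ d Ψ Φ, Φ - Ψ = d → Ψ ≤ Φ → (∀ x, Ψ < x → x ≤ Φ → F x = none) →
      alphaF T pert ref σ F Ψ = alphaF T pert ref σ F Φ := by
  intro d
  induction d with
  | zero =>
    intro Ψ Φ h hle _
    have hh : Ψ = Φ := by omega
    subst hh; rfl
  | succ n ih =>
    intro Ψ Φ h hle hnone
    have hΨΦ : Ψ < Φ := by omega
    have h1 : alphaF T pert ref σ F (Ψ + 1) = alphaF T pert ref σ F Φ := by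
      apply ih <;> try omega
      intro x hx1 hx2; exact hnone x (by omega) hx2
    by_cases hT : T ≤ Ψ
    · have hz : ∀ x, T ≤ x → alphaF T pert ref σ F x = 0 := by
        intro x hx; rw [alphaF]; simp [hx]
      rw [hz Ψ hT, hz Φ (by omega)]
    · rw [alphaF, dif_neg hT]
      have : F (Ψ + 1) = none := hnone (Ψ + 1) (by omega) (by omega)
      simp only [this, h1]

/-- If the perturbation function is increasing in the phase and the refractory
function is monotone, then whenever oscillators at phase Φ do not fire and all
entries of the failure vector strictly between Ψ and Φ (inclusive of Φ's
successors' range) are ★, oscillators at every phase Ψ ≤ Φ do not fire either.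
Consequently every failure vector in `failSet` is well formed: a ★ entry forces
★ at all lower phases (within {1,…,T}). -/
theorem failure_vectors_well_formed (T : ℕ) (pert ref : ℕ → ℕ → ℕ) (σ : ℕ → ℕ)
    (hpert : ∀ Φ Ψ a, Ψ ≤ Φ → pert Ψ a ≤ pert Φ a)
    (href : ∀ Φ Ψ d e, Ψ ≤ Φ → d ≤ e → ref Ψ d ≤ ref Φ e) :
    (∀ (F : ℕ → Option ℕ) (Φ Ψ : ℕ), Ψ ≤ Φ →
        (∀ x, Ψ < x → x ≤ Φ → F x = none) →
        ¬ T < updateF T pert ref σ F Φ →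
        ¬ T < updateF T pert ref σ F Ψ) ∧
    (∀ F ∈ failSet T pert ref σ, ∀ i j, 1 ≤ j → j ≤ i → i ≤ T →
        F i = none → F j = none) := by
  have key : ∀ (F : ℕ → Option ℕ) (Φ Ψ : ℕ), Ψ ≤ Φ →
      (∀ x, Ψ < x → x ≤ Φ → F x = none) →
      ¬ T < updateF T pert ref σ F Φ → ¬ T < updateF T pert ref σ F Ψ := by
    intro F Φ Ψ hle hnone hΦ
    have ha : alphaF T pert ref σ F Ψ = alphaF T pert ref σ F Φ :=
      alphaF_eq_of_none T pert ref σ F (Φ - Ψ) Ψ Φ rfl hle hnone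
    have : updateF T pert ref σ F Ψ ≤ updateF T pert ref σ F Φ := by
      unfold updateF
      have := href Φ Ψ (pert Ψ (alphaF T pert ref σ F Ψ)) (pert Φ (alphaF T pert ref σ F Φ))
        hle (by rw [ha]; exact hpert Φ Ψ _ hle)
      omega
    omega
  refine ⟨key, ?_⟩
  intro F hF i j hj hji hiT hi
  obtain ⟨h1, _⟩ := hF
  have hnotfire_i : ¬ T < updateF T pert ref σ F i := by
    intro hlt
    obtain ⟨f, hf, _⟩ := (h1 i (by omega) hiT).1 hlt
    rw [hi] at hf; exact Option.some_ne_none f hf.symm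
  have main : ∀ n x, 1 ≤ x → x ≤ i → i - x ≤ n → F x = none := by
    intro n
    induction n with
    | zero =>
      intro x h1x h2x h3x
      have hh : x = i := by omega
      subst hh; exact hi
    | succ m ih =>
      intro x h1x h2x h3x
      by_cases hc : i - x ≤ m
      · exact ih x h1x h2x hc
      · have hnone : ∀ y, x < y → y ≤ i → F y = none := by
          intro y hy1 hy2; exact ih y (by omega) hy2 (by omega)
        have := key F i x h2x hnone hnotfire_i
        exact (h1 x h1x (by omega)).2 this
  exact main (i - j) j hj hji (le_refl _)
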